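/- If a countable collection C = {L_1, L_2, ...} of infinite languages over U can be exhaustively generated in the limit by some algorithm, then C satisfies Weak Angluin's Condition with Existence. -/
import Mathlib


/-! STATEMENT 10: If a countable collection C = {L_1, L_2, ...} of infinite languages over U can be exhaustively generated in the limit by some algorithm, then C satisfies Weak Angluin's Condition with Existence. -/

/-- `x` is an enumeration of the language `K`. -/
def IsEnumerationOf {U : Type} (K : Set U) (x : ℕ → U) : Prop :=
  (∀ t, x t ∈ K) ∧ ∀ w ∈ K, ∃ t, x t = w

/-- The set `S_t` of distinct strings among the first `t` inputs. -/
def seen {U : Type} (x : ℕ → U) (t : ℕ) : Set U := x '' {i | i < t}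

/-- The input prefix `(x_1, ..., x_t)` as a list. -/
def inputList {U : Type} (x : ℕ → U) (t : ℕ) : List U :=
  List.ofFn (fun i : Fin t => x i)

/-- `Z_{<t}`: the distinct strings among `G_1(1), ..., G_{t-1}(1)`. -/
def ZltSet {U : Type} (A : List U → ℕ → U) (x : ℕ → U) (t : ℕ) : Set U :=
  (fun s => A (inputList x s) 0) '' {s | 1 ≤ s ∧ s < t}

/-- `Z_{≥t}`: the distinct strings in `G_t(1), G_t(2), ...`. -/
def ZgeSet {U : Type} (A : List U → ℕ → U) (x : ℕ → U) (t : ℕ) : Set U :=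
  Set.range (A (inputList x t))

/-- The algorithm `A` exhaustively generates in the limit from the collection `C`. -/
def ExhaustivelyGenerates {U : Type} (A : List U → ℕ → U) (C : Set (Set U)) : Prop :=
  ∀ K ∈ C, ∀ x : ℕ → U, IsEnumerationOf K x →
    ∃ tstar : ℕ, ∀ t : ℕ, tstar ≤ t →
      (ZgeSet A x t \ K).Finite ∧ K ⊆ seen x t ∪ ZltSet A x t ∪ ZgeSet A x t

/-- Weak Angluin's Condition with Existence: every L ∈ C has a finite tell-tale
T ⊆ L such that every L' ∈ C with T ⊆ L' and L' ⊊ L satisfies |L \ L'| < ∞. -/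
def WeakAngluinExistence {U : Type} (C : Set (Set U)) : Prop :=
  ∀ L ∈ C, ∃ T : Set U, T.Finite ∧ T ⊆ L ∧
    ∀ L' ∈ C, T ⊆ L' → L' ⊂ L → (L \ L').Finite

section Aux

variable {U : Type}

lemma exists_enum [Countable U] {K : Set U} (hK : K.Infinite) :
    ∃ f : ℕ → U, IsEnumerationOf K f := by
  obtain ⟨f, hf⟩ := (Set.to_countable K).exists_eq_range hK.nonempty
  refine ⟨f, fun t => hf ▸ Set.mem_range_self t, fun w hw => ?_⟩
  rw [hf] at hw; exact hw

lemma inputList_length (x : ℕ → U) (t : ℕ) : (inputList x t).length = t := by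
  simp [inputList]

lemma inputList_getElem (x : ℕ → U) (t i : ℕ) (h : i < (inputList x t).length) :
    (inputList x t)[i] = x i := by
  simp [inputList]

lemma inputList_take (x : ℕ → U) {s t : ℕ} (h : s ≤ t) :
    inputList x s = (inputList x t).take s := by
  apply List.ext_getElem
  · simp [inputList_length]; omega
  · intro i h1 h2
    rw [List.getElem_take, inputList_getElem, inputList_getElem]

lemma agree_of_inputList_eq {x y : ℕ → U} {t : ℕ} (h : inputList x t = inputList y t) :
    ∀ i < t, x i = y i := by
  intro i hi
  simpa using congrFun (List.ofFn_inj.mp h) ⟨i, hi⟩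

lemma seen_eq_of_inputList_eq {x y : ℕ → U} {t : ℕ} (h : inputList x t = inputList y t) :
    seen x t = seen y t := by
  unfold seen
  ext u
  constructor <;> rintro ⟨i, hi, rfl⟩
  · exact ⟨i, hi, (agree_of_inputList_eq h i hi).symm⟩
  · exact ⟨i, hi, agree_of_inputList_eq h i hi⟩

lemma zlt_eq_of_inputList_eq (A : List U → ℕ → U) {x y : ℕ → U} {t : ℕ}
    (h : inputList x t = inputList y t) : ZltSet A x t = ZltSet A y t := by
  unfold ZltSet
  have key : ∀ s < t, inputList x s = inputList y s := by
    intro s hs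
    rw [inputList_take x hs.le, inputList_take y hs.le, h]
  ext u
  constructor <;> rintro ⟨s, ⟨hs1, hs2⟩, rfl⟩
  · exact ⟨s, ⟨hs1, hs2⟩, show A (inputList y s) 0 = A (inputList x s) 0 by rw [key s hs2]⟩
  · exact ⟨s, ⟨hs1, hs2⟩, show A (inputList x s) 0 = A (inputList y s) 0 by rw [key s hs2]⟩

lemma zge_eq_of_inputList_eq (A : List U → ℕ → U) {x y : ℕ → U} {t : ℕ}
    (h : inputList x t = inputList y t) : ZgeSet A x t = ZgeSet A y t := by
  unfold ZgeSet; rw [h]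

lemma seen_subset_list (x : ℕ → U) (t : ℕ) : seen x t ⊆ {u | u ∈ inputList x t} := by
  rintro u ⟨i, hi, rfl⟩
  have hi' : i < (inputList x t).length := by rw [inputList_length]; exact hi
  rw [← inputList_getElem x t i hi']
  exact List.getElem_mem hi'

/-- The key one-stage construction: from any prefix `p` of elements of `L₀`,
we can extend it to a prefix `q` such that the algorithm, fed `q`, fails to
cover some witness `w ∈ L₀` at time `q.length`. -/
lemma step_lemma [Countable U]
    (L : ℕ → Set U) (hL : ∀ i, (L i).Infinite)
    (A : List U → ℕ → U) (hA : ExhaustivelyGenerates A (Set.range L))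
    (L₀ : Set U)
    (hbad : ∀ T : Set U, T.Finite → T ⊆ L₀ →
      ∃ L' ∈ Set.range L, T ⊆ L' ∧ L' ⊂ L₀ ∧ (L₀ \ L').Infinite)
    (p : List U) (hp : ∀ u ∈ p, u ∈ L₀) :
    ∃ (q : List U) (w : U), p <+: q ∧ p.length < q.length ∧ (∀ u ∈ q, u ∈ L₀) ∧
      w ∈ L₀ ∧ ∀ x : ℕ → U, inputList x q.length = q →
        w ∉ seen x q.length ∪ ZltSet A x q.length ∪ ZgeSet A x q.length := by
  obtain ⟨L', hL'mem, hTL', hL'sub, hinf⟩ :=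
    hbad {u | u ∈ p} p.finite_toSet (fun u hu => hp u hu)
  obtain ⟨j, hj⟩ := hL'mem
  obtain ⟨f, hf⟩ := exists_enum (show L'.Infinite from hj ▸ hL j)
  -- the hybrid enumeration of L'
  set y : ℕ → U := fun i => if h : i < p.length then p[i] else f (i - p.length) with hy
  have hymem : ∀ i, y i ∈ L' := by
    intro i
    by_cases h : i < p.length
    · simpa [hy, h] using hTL' (List.getElem_mem h)
    · simpa [hy, h] using hf.1 (i - p.length)
  have henum : IsEnumerationOf L' y := by
    refine ⟨hymem, fun w hw => ?_⟩
    obtain ⟨s, hs⟩ := hf.2 w hw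
    exact ⟨p.length + s, by simp [hy, hs]⟩
  obtain ⟨tstar, htstar⟩ := hA L' ⟨j, hj⟩ y henum
  set t : ℕ := max tstar (p.length + 1) with ht
  have hcond := htstar t (le_max_left _ _)
  set q : List U := inputList y t with hq
  have hqlen : q.length = t := inputList_length y t
  have hqget : ∀ i (h : i < q.length), q[i] = y i := fun i h => inputList_getElem y t i h
  -- the finite set of forbidden elements
  have hB : ({u | u ∈ q} ∪ ZltSet A y t ∪ (ZgeSet A y t \ L')).Finite := by
    refine (q.finite_toSet.union ?_).union hcond.1
    have : {s : ℕ | 1 ≤ s ∧ s < t}.Finite := by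
      simpa [Set.Ico, and_comm] using Set.finite_Ico 1 t
    exact this.image _
  obtain ⟨w, hw⟩ := (hinf.diff hB).nonempty
  have hwL₀ : w ∈ L₀ := hw.1.1
  have hwL' : w ∉ L' := hw.1.2
  have hwB := hw.2
  refine ⟨q, w, ?_, ?_, ?_, hwL₀, ?_⟩
  · rw [List.prefix_iff_eq_take]
    rw [hq, ← inputList_take y (show p.length ≤ t from (le_max_right _ _).trans' (by omega))]
    apply List.ext_getElem
    · simp [inputList_length]
    · intro i h1 h2
      rw [inputList_getElem]
      simp [hy, (by rwa [inputList_length] at h2 : i < p.length)]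
  · rw [hqlen]; omega
  · intro u hu
    obtain ⟨i, hi, rfl⟩ := List.mem_iff_getElem.mp hu
    rw [hqget i hi]
    exact hL'sub.1 (hymem i)
  · intro x hx
    rw [hqlen] at hx ⊢
    have h1 := seen_eq_of_inputList_eq (x := x) (y := y) (t := t) (by rw [hx])
    have h2 := zlt_eq_of_inputList_eq A (t := t) (x := x) (y := y) (by rw [hx])
    have h3 := zge_eq_of_inputList_eq A (t := t) (x := x) (y := y) (by rw [hx])
    rw [h1, h2, h3]
    rintro (hmem | hmem)
    · rcases hmem with hmem | hmem
      · exact hwB (Or.inl (Or.inl (seen_subset_list y t hmem)))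
      · exact hwB (Or.inl (Or.inr hmem))
    · exact hwB (Or.inr ⟨hmem, hwL'⟩)

end Aux

theorem exhaustive_generation_necessary_condition
    (U : Type) [Countable U] [Infinite U]
    (L : ℕ → Set U) (hL : ∀ i, (L i).Infinite)
    (h : ∃ A : List U → ℕ → U, ExhaustivelyGenerates A (Set.range L)) :
    WeakAngluinExistence (Set.range L) := by
  obtain ⟨A, hA⟩ := h
  intro L₀ hL₀
  by_contra hcon
  push_neg at hcon
  have hbad : ∀ T : Set U, T.Finite → T ⊆ L₀ →
      ∃ L' ∈ Set.range L, T ⊆ L' ∧ L' ⊂ L₀ ∧ (L₀ \ L').Infinite := by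
    intro T hT hTL
    obtain ⟨L', hm, h1, h2, h3⟩ := hcon T hT hTL
    exact ⟨L', hm, h1, h2, h3⟩
  obtain ⟨j, hj⟩ := hL₀
  have hL₀inf : L₀.Infinite := hj ▸ hL j
  obtain ⟨e, he⟩ := exists_enum hL₀inf
  obtain ⟨u0, hu0⟩ := hL₀inf.nonempty
  -- the step function, via choice
  have hstep : ∀ p : List U, ∃ (q : List U) (w : U), (∀ u ∈ p, u ∈ L₀) →
      (p <+: q ∧ p.length < q.length ∧ (∀ u ∈ q, u ∈ L₀) ∧
        w ∈ L₀ ∧ ∀ x : ℕ → U, inputList x q.length = q →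
          w ∉ seen x q.length ∪ ZltSet A x q.length ∪ ZgeSet A x q.length) := by
    intro p
    by_cases hp : ∀ u ∈ p, u ∈ L₀
    · obtain ⟨q, w, hq⟩ := step_lemma L hL A hA L₀ hbad p hp
      exact ⟨q, w, fun _ => hq⟩
    · exact ⟨p, u0, fun hp' => absurd hp' hp⟩
  choose Q W hQW using hstep
  -- the adversarial prefixes
  set P : ℕ → List U := fun n => Nat.rec [] (fun n pn => Q (pn ++ [e n])) n with hP
  have hPsucc : ∀ n, P (n + 1) = Q (P n ++ [e n]) := fun n => rfl
  have hPmem : ∀ n, ∀ u ∈ P n, u ∈ L₀ := by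
    intro n
    induction n with
    | zero => simp [hP]
    | succ n ih =>
      have harg : ∀ u ∈ P n ++ [e n], u ∈ L₀ := by
        intro u hu
        rcases List.mem_append.mp hu with hu | hu
        · exact ih u hu
        · simp at hu; subst hu; exact he.1 n
      rw [hPsucc]
      exact (hQW (P n ++ [e n]) harg).2.2.1
  have harg : ∀ n, ∀ u ∈ P n ++ [e n], u ∈ L₀ := by
    intro n u hu
    rcases List.mem_append.mp hu with hu | hu
    · exact hPmem n u hu
    · simp at hu; subst hu; exact he.1 n
  have hQW' := fun n => hQW (P n ++ [e n]) (harg n)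
  have hpre : ∀ n, P n ++ [e n] <+: P (n + 1) := by
    intro n; rw [hPsucc]; exact (hQW' n).1
  have hlen : ∀ n, (P n).length + 1 < (P (n + 1)).length := by
    intro n
    have := (hQW' n).2.1
    rw [hPsucc]
    simpa using this
  have hpre' : ∀ n, P n <+: P (n + 1) :=
    fun n => (List.prefix_append (P n) [e n]).trans (hpre n)
  have hmono : ∀ m n, m ≤ n → P m <+: P n := by
    intro m n hmn
    induction n, hmn using Nat.le_induction with
    | base => exact List.prefix_refl _
    | succ n hn ih => exact ih.trans (hpre' n)
  have hlen' : ∀ n, n < (P (n + 1)).length := by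
    intro n
    induction n with
    | zero => have := hlen 0; omega
    | succ n ih => have := hlen (n + 1); omega
  -- the adversarial enumeration
  set x : ℕ → U := fun i => (P (i + 1)).getD i u0 with hxdef
  have hx : ∀ n, ∀ i, (h : i < (P n).length) → x i = (P n)[i] := by
    intro n i hi
    have hilen : i < (P (i + 1)).length := hlen' i
    rw [hxdef]
    simp only [List.getD_eq_getElem _ _ hilen]
    rcases le_total n (i + 1) with hc | hc
    · exact ((hmono n (i + 1) hc).getElem hi).symm
    · exact (hmono (i + 1) n hc).getElem hilen
  have hinput : ∀ n, inputList x (P n).length = P n := by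
    intro n
    apply List.ext_getElem
    · simp [inputList_length]
    · intro i h1 h2
      rw [inputList_getElem, hx n i h2]
  have hxenum : IsEnumerationOf L₀ x := by
    constructor
    · intro i
      have hilen : i < (P (i + 1)).length := hlen' i
      rw [hxdef]
      simp only [List.getD_eq_getElem _ _ hilen]
      exact hPmem (i + 1) _ (List.getElem_mem hilen)
    · intro w hw
      obtain ⟨n, hn⟩ := he.2 w hw
      have hidx : (P n).length < (P n ++ [e n]).length := by simp
      have hidx2 : (P n).length < (P (n + 1)).length := hidx.trans_le (hpre n).length_le
      refine ⟨(P n).length, ?_⟩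
      rw [hx (n + 1) _ hidx2, ← (hpre n).getElem hidx]
      simp [hn]
  obtain ⟨tstar, htstar⟩ := hA L₀ ⟨j, hj⟩ x hxenum
  -- contradiction at stage n = tstar
  set n := tstar with hn
  set t : ℕ := (P (n + 1)).length with htdef
  have htge : tstar ≤ t := by have := hlen' n; omega
  have hcover := (htstar t htge).2
  have hkey := (hQW' n).2.2.2.2
  have hwL₀ := (hQW' n).2.2.2.1
  have hinp : inputList x (Q (P n ++ [e n])).length = Q (P n ++ [e n]) := by
    rw [← hPsucc]; exact hinput (n + 1)
  have := hkey x hinp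
  rw [← hPsucc n, ← htdef] at this
  exact this (hcover hwL₀)
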